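/- (Proposition 3.) Assume Δ = 0 and γ ≠ 4. Let λ₁, λ₂ ∈ K and set s₁' := s₁ ∘ τ(λ₁·c₁) and s₂' := s₂ ∘ τ(λ₂·c₂). Then for every n ≥ 1, (s₁' ∘ s₂')ⁿ = (s₁ ∘ s₂)ⁿ ∘ τ(B_n), where, writing u := u_α: if n is even, B_n = u(n)·((α·u(n)·λ₁ + u(n−1)·λ₂)·c₁ + α·(u(n+1)·λ₁ + u(n)·λ₂)·c₂), and if n is odd, B_n = u(n)·((u(n)·λ₁ + u(n−1)·λ₂)·c₁ + (α·u(n+1)·λ₁ + u(n)·λ₂)·c₂). -/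

import Mathlib

noncomputable section

variable {K : Type*} [Field K] [CharZero K]

/-- The linear functional `x ↦ c 0 * x 0 + c 1 * x 1 + c 2 * x 2` on `K³`. -/
def lf (c : Fin 3 → K) : (Fin 3 → K) →ₗ[K] K :=
  c 0 • LinearMap.proj 0 + c 1 • LinearMap.proj 1 + c 2 • LinearMap.proj 2

/-- `s₁ : x ↦ x − (2x₁ − α x₂ − β x₃)·a₁` where `a₁ = Pi.single 0 1`. -/
def s1 (α β : K) : Module.End K (Fin 3 → K) :=
  LinearMap.id - (lf ![2, -α, -β]).smulRight (Pi.single 0 1)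

/-- `s₂ : x ↦ x − (−x₁ + 2x₂ − l·x₃)·a₂`. -/
def s2 (l : K) : Module.End K (Fin 3 → K) :=
  LinearMap.id - (lf ![-1, 2, -l]).smulRight (Pi.single 1 1)

/-- `s₃ : x ↦ x − (−x₁ − m·x₂ + 2x₃)·a₃`. -/
def s3 (m : K) : Module.End K (Fin 3 → K) :=
  LinearMap.id - (lf ![-1, -m, 2]).smulRight (Pi.single 2 1)

/-- `b = b₁ = (4−γ)a₁ + (l+2)a₂ + (m+2)a₃`, with `γ = l·m`. -/
def bvec (l m : K) : Fin 3 → K := ![4 - l * m, l + 2, m + 2]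

/-- `b₂ = (2α+βm)a₁ + (4−β)a₂ + (α+2m)a₃`. -/
def b2vec (α β l m : K) : Fin 3 → K := ![2*α + β*m, 4 - β, α + 2*m]

/-- `b₃ = (2β+αl)a₁ + (β+2l)a₂ + (4−α)a₃`. -/
def b3vec (α β l m : K) : Fin 3 → K := ![2*β + α*l, β + 2*l, 4 - α]

/-- `τ(λ,μ) : a₁ ↦ a₁ + ω·b, a₂ ↦ a₂ + λ·b, a₃ ↦ a₃ + μ·b`,
where `ω = −(λ(l+2) + μ(m+2))/(4−γ)`. -/
def tau (l m lam mu : K) : Module.End K (Fin 3 → K) :=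
  LinearMap.id +
    (lf ![-(lam*(l+2) + mu*(m+2))/(4 - l*m), lam, mu]).smulRight (bvec l m)

/-- `τ` applied to a vector `(λ,μ) ∈ K²`. -/
def tauv (l m : K) (v : K × K) : Module.End K (Fin 3 → K) := tau l m v.1 v.2

def c1 (α β : K) : K × K := (α, β)
def c2 (l : K) : K × K := (-2, l)
def c3 (m : K) : K × K := (m, -2)

/-- `z₁ : a₁ ↦ −a₁ + (2/(4−γ))·b, a₂ ↦ −a₂, a₃ ↦ −a₃`. -/
def z1 (l m : K) : Module.End K (Fin 3 → K) :=
  -LinearMap.id + (lf ![2/(4 - l*m), 0, 0]).smulRight (bvec l m)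

/-- `z₂ : a₂ ↦ −a₂ + (2/(l+2))·b, a₁ ↦ −a₁, a₃ ↦ −a₃`. -/
def z2 (l m : K) : Module.End K (Fin 3 → K) :=
  -LinearMap.id + (lf ![0, 2/(l+2), 0]).smulRight (bvec l m)

/-- `z₃ : a₃ ↦ −a₃ + (2/(m+2))·b, a₁ ↦ −a₁, a₂ ↦ −a₂`. -/
def z3 (l m : K) : Module.End K (Fin 3 → K) :=
  -LinearMap.id + (lf ![0, 0, 2/(m+2)]).smulRight (bvec l m)

/-- The linear functional `(λ,μ) ↦ c.1·λ + c.2·μ` on `K²`. -/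
def lf2 (c : K × K) : (K × K) →ₗ[K] K := c.1 • LinearMap.fst K K K + c.2 • LinearMap.snd K K K

/-- `σ₁(λ,μ) = (λ,μ) − ((λ(l+2)+μ(m+2))/(4−γ))·(α,β)`. -/
def sigma1 (α β l m : K) : Module.End K (K × K) :=
  LinearMap.id - (lf2 ((l+2)/(4 - l*m), (m+2)/(4 - l*m))).smulRight (α, β)

/-- `σ₂(λ,μ) = (λ,μ) + λ·(−2,l)`. -/
def sigma2 (l : K) : Module.End K (K × K) :=
  LinearMap.id + (LinearMap.fst K K K).smulRight ((-2 : K), l)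

/-- `σ₃(λ,μ) = (λ,μ) + μ·(m,−2)`. -/
def sigma3 (m : K) : Module.End K (K × K) :=
  LinearMap.id + (LinearMap.snd K K K).smulRight (m, (-2 : K))

/-- The sequence `u_x` : `u_x(0)=0, u_x(1)=u_x(2)=1, u_x(3)=x−1,
u_x(n+4) = (x−2)·u_x(n+2) − u_x(n)`. -/
def useq (x : K) : ℕ → K
  | 0 => 0
  | 1 => 1
  | 2 => 1
  | 3 => x - 1
  | (n+4) => (x - 2) * useq x (n+2) - useq x n


set_option maxHeartbeats 1000000 in
section
set_option maxHeartbeats 1000000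

def tauc (α β l m x y : K) : Module.End K (Fin 3 → K) :=
  LinearMap.id + (lf ![y - 2*x, x*α - 2*y, x*β + y*l]).smulRight (bvec l m)


theorem single0 : (Pi.single 0 1 : Fin 3 → K) = ![1,0,0] := by
  funext j; fin_cases j <;> simp

theorem single1 : (Pi.single 1 1 : Fin 3 → K) = ![0,1,0] := by
  funext j; fin_cases j <;> simp

theorem single2 : (Pi.single 2 1 : Fin 3 → K) = ![0,0,1] := by
  funext j; fin_cases j <;> simp

theorem tau_congr (l m : K) {a b a' b' : K} (h1 : a = a') (h2 : b = b') :
    tau l m a b = tau l m a' b' := by rw [h1, h2]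

theorem tauc_congr (α β l m : K) {a b a' b' : K} (h1 : a = a') (h2 : b = b') :
    tauc α β l m a b = tauc α β l m a' b' := by rw [h1, h2]

theorem tauc_tau (α β l m : K)
    (hΔ : 8 - 2*α - 2*β - 2*(l*m) - (α*l + β*m) = 0) (hγ : l*m ≠ 4) (x y : K) :
    tauc α β l m x y = tau l m (x*α - 2*y) (x*β + y*l) := by
  have hD : (4 : K) - l*m ≠ 0 := sub_ne_zero.mpr (Ne.symm hγ)
  have hw : y - 2*x = -((x*α - 2*y)*(l+2) + (x*β + y*l)*(m+2))/(4 - l*m) := by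
    field_simp
    linear_combination -x * hΔ
  unfold tauc tau
  rw [hw]

theorem tau_mul (l m : K) (hγ : l*m ≠ 4) (a b c d : K) :
    tau l m a b * tau l m c d = tau l m (a+c) (b+d) := by
  have hD : (4 : K) - l*m ≠ 0 := sub_ne_zero.mpr (Ne.symm hγ)
  apply LinearMap.ext
  intro x
  funext i
  fin_cases i <;>
    simp only [tau, lf, bvec, Module.End.mul_apply, LinearMap.add_apply,
      LinearMap.smulRight_apply, LinearMap.smul_apply, LinearMap.id_apply,
      LinearMap.proj_apply, Function.eval, Pi.add_apply, Pi.smul_apply, smul_eq_mul,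
      Matrix.cons_val_zero, Matrix.cons_val_one, Matrix.head_cons,
      Matrix.cons_val_two, Matrix.tail_cons, Matrix.vecHead, Matrix.vecTail,
      Fin.isValue, Function.comp_apply, Fin.succ, Fin.zero_eta, Fin.mk_one, Fin.reduceFinMk,
        Matrix.cons_val, Matrix.cons_val_succ', Matrix.cons_val_fin_one] <;>
    field_simp <;> ring

theorem tauc_mul (α β l m : K)
    (hΔ : 8 - 2*α - 2*β - 2*(l*m) - (α*l + β*m) = 0) (hγ : l*m ≠ 4) (a b c d : K) :
    tauc α β l m a b * tauc α β l m c d = tauc α β l m (a+c) (b+d) := by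
  rw [tauc_tau α β l m hΔ hγ, tauc_tau α β l m hΔ hγ, tauc_tau α β l m hΔ hγ,
    tau_mul l m hγ]
  exact tau_congr l m (by ring) (by ring)

theorem tauc_s1 (α β l m : K)
    (hΔ : 8 - 2*α - 2*β - 2*(l*m) - (α*l + β*m) = 0) (x y : K) :
    tauc α β l m x y * s1 α β = s1 α β * tauc α β l m (y - x) y := by
  apply LinearMap.ext
  intro v
  funext i
  fin_cases i
  case _ =>
    simp only [tauc, s1, lf, bvec, Module.End.mul_apply, LinearMap.add_apply,
      LinearMap.sub_apply, LinearMap.smulRight_apply, LinearMap.smul_apply,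
      LinearMap.id_apply, LinearMap.proj_apply, Function.eval, Pi.add_apply,
      Pi.sub_apply, Pi.smul_apply, smul_eq_mul, Pi.single_apply,
      Matrix.cons_val_zero, Matrix.cons_val_one, Matrix.head_cons,
      Matrix.cons_val_two, Matrix.tail_cons, Matrix.vecHead, Matrix.vecTail,
      Fin.isValue, Function.comp_apply, Fin.succ]
    norm_num [Fin.ext_iff]
    linear_combination ((2*x - y)*v 0 + ((y - x)*α - 2*y)*v 1 + ((y - x)*β + y*l)*v 2) * hΔ
  case _ =>
    simp only [tauc, s1, lf, bvec, Module.End.mul_apply, LinearMap.add_apply,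
      LinearMap.sub_apply, LinearMap.smulRight_apply, LinearMap.smul_apply,
      LinearMap.id_apply, LinearMap.proj_apply, Function.eval, Pi.add_apply,
      Pi.sub_apply, Pi.smul_apply, smul_eq_mul, Pi.single_apply,
      Matrix.cons_val_zero, Matrix.cons_val_one, Matrix.head_cons,
      Matrix.cons_val_two, Matrix.tail_cons, Matrix.vecHead, Matrix.vecTail,
      Fin.isValue, Function.comp_apply, Fin.succ]
    norm_num [Fin.ext_iff]
    refine Or.inl ?_
    ring
  case _ =>
    simp only [tauc, s1, lf, bvec, Module.End.mul_apply, LinearMap.add_apply,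
      LinearMap.sub_apply, LinearMap.smulRight_apply, LinearMap.smul_apply,
      LinearMap.id_apply, LinearMap.proj_apply, Function.eval, Pi.add_apply,
      Pi.sub_apply, Pi.smul_apply, smul_eq_mul, Pi.single_apply,
      Matrix.cons_val_zero, Matrix.cons_val_one, Matrix.head_cons,
      Matrix.cons_val_two, Matrix.tail_cons, Matrix.vecHead, Matrix.vecTail,
      Fin.isValue, Function.comp_apply, Fin.succ]
    norm_num [Fin.ext_iff]
    refine Or.inl ?_
    ring

theorem tauc_s2 (α β l m : K) (x y : K) :
    tauc α β l m x y * s2 l = s2 l * tauc α β l m x (α*x - y) := by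
  apply LinearMap.ext
  intro v
  funext i
  fin_cases i
  case _ =>
    simp only [tauc, s2, lf, bvec, Module.End.mul_apply, LinearMap.add_apply,
      LinearMap.sub_apply, LinearMap.smulRight_apply, LinearMap.smul_apply,
      LinearMap.id_apply, LinearMap.proj_apply, Function.eval, Pi.add_apply,
      Pi.sub_apply, Pi.smul_apply, smul_eq_mul, Pi.single_apply,
      Matrix.cons_val_zero, Matrix.cons_val_one, Matrix.head_cons,
      Matrix.cons_val_two, Matrix.tail_cons, Matrix.vecHead, Matrix.vecTail,
      Fin.isValue, Function.comp_apply, Fin.succ]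
    norm_num [Fin.ext_iff]
    try refine Or.inl ?_
    try ring
  case _ =>
    simp only [tauc, s2, lf, bvec, Module.End.mul_apply, LinearMap.add_apply,
      LinearMap.sub_apply, LinearMap.smulRight_apply, LinearMap.smul_apply,
      LinearMap.id_apply, LinearMap.proj_apply, Function.eval, Pi.add_apply,
      Pi.sub_apply, Pi.smul_apply, smul_eq_mul, Pi.single_apply,
      Matrix.cons_val_zero, Matrix.cons_val_one, Matrix.head_cons,
      Matrix.cons_val_two, Matrix.tail_cons, Matrix.vecHead, Matrix.vecTail,
      Fin.isValue, Function.comp_apply, Fin.succ]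
    norm_num [Fin.ext_iff]
    try refine Or.inl ?_
    try ring
  case _ =>
    simp only [tauc, s2, lf, bvec, Module.End.mul_apply, LinearMap.add_apply,
      LinearMap.sub_apply, LinearMap.smulRight_apply, LinearMap.smul_apply,
      LinearMap.id_apply, LinearMap.proj_apply, Function.eval, Pi.add_apply,
      Pi.sub_apply, Pi.smul_apply, smul_eq_mul, Pi.single_apply,
      Matrix.cons_val_zero, Matrix.cons_val_one, Matrix.head_cons,
      Matrix.cons_val_two, Matrix.tail_cons, Matrix.vecHead, Matrix.vecTail,
      Fin.isValue, Function.comp_apply, Fin.succ]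
    norm_num [Fin.ext_iff]
    try refine Or.inl ?_
    try ring

theorem tauc_zero (α β l m : K) : tauc α β l m 0 0 = 1 := by
  apply LinearMap.ext
  intro v
  funext i
  fin_cases i <;>
    simp [tauc, lf, bvec, single0, single1, single2]


theorem useq_rec (x : K) (n : ℕ) :
    useq x (n+4) = (x - 2) * useq x (n+2) - useq x n := by
  rw [useq]

theorem useq_pair (x : K) : ∀ k : ℕ,
    useq x (2*k+2) = useq x (2*k+1) - useq x (2*k) ∧
    useq x (2*k+3) = x * useq x (2*k+2) - useq x (2*k+1) := by
  intro k
  induction k with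
  | zero =>
    refine ⟨?_, ?_⟩ <;> norm_num [useq] <;> ring
  | succ k ih =>
    have h4 : useq x (2*k+4) = (x-2) * useq x (2*k+2) - useq x (2*k) := useq_rec x (2*k)
    have h5 : useq x (2*k+5) = (x-2) * useq x (2*k+3) - useq x (2*k+1) := by
      have := useq_rec x (2*k+1)
      rw [show 2*k+1+4 = 2*k+5 by ring, show 2*k+1+2 = 2*k+3 by ring] at this
      exact this
    have hA : useq x (2*k+4) = useq x (2*k+3) - useq x (2*k+2) := by
      linear_combination h4 - ih.2 - ih.1
    refine ⟨?_, ?_⟩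
    · rw [show 2*(k+1)+2 = 2*k+4 by ring, show 2*(k+1)+1 = 2*k+3 by ring,
        show 2*(k+1) = 2*k+2 by ring]
      exact hA
    · rw [show 2*(k+1)+3 = 2*k+5 by ring, show 2*(k+1)+2 = 2*k+4 by ring,
        show 2*(k+1)+1 = 2*k+3 by ring]
      linear_combination h5 - x*hA - ih.2

theorem useq_Q (x : K) : ∀ k : ℕ,
    (x * useq x (2*k+2)^2 - x * useq x (2*k+1) * useq x (2*k+2) + useq x (2*k+1)^2 = 1) ∧
    (useq x (2*k+3)^2 - x * useq x (2*k+2) * useq x (2*k+3) + x * useq x (2*k+2)^2 = 1) := by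
  intro k
  induction k with
  | zero =>
    refine ⟨?_, ?_⟩ <;> norm_num [useq] <;> ring
  | succ k ih =>
    have h34 : useq x (2*k+4) = useq x (2*k+3) - useq x (2*k+2) := by
      have := (useq_pair x (k+1)).1
      rwa [show 2*(k+1)+2 = 2*k+4 by ring, show 2*(k+1)+1 = 2*k+3 by ring,
        show 2*(k+1) = 2*k+2 by ring] at this
    have h45 : useq x (2*k+5) = x * useq x (2*k+4) - useq x (2*k+3) := by
      have := (useq_pair x (k+1)).2
      rwa [show 2*(k+1)+3 = 2*k+5 by ring, show 2*(k+1)+2 = 2*k+4 by ring,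
        show 2*(k+1)+1 = 2*k+3 by ring] at this
    have hQ : x * useq x (2*k+4)^2 - x * useq x (2*k+3) * useq x (2*k+4) + useq x (2*k+3)^2 = 1 := by
      linear_combination ih.2 + x*(useq x (2*k+4) - useq x (2*k+2))*h34
    refine ⟨?_, ?_⟩
    · rw [show 2*(k+1)+2 = 2*k+4 by ring, show 2*(k+1)+1 = 2*k+3 by ring]
      exact hQ
    · rw [show 2*(k+1)+3 = 2*k+5 by ring, show 2*(k+1)+2 = 2*k+4 by ring]
      linear_combination hQ + (useq x (2*k+5) - useq x (2*k+3))*h45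

theorem step_lemma (α β l m : K)
    (hΔ : 8 - 2*α - 2*β - 2*(l*m) - (α*l + β*m) = 0) (hγ : l*m ≠ 4)
    (lam1 lam2 p q : K) :
    tauc α β l m p q *
      ((s1 α β * tauc α β l m lam1 0) * (s2 l * tauc α β l m 0 lam2))
    = (s1 α β * s2 l) *
        tauc α β l m (q - p + lam1) (α*(q - p + lam1) - q + lam2) := by
  simp only [← mul_assoc]
  rw [tauc_s1 α β l m hΔ p q]
  rw [mul_assoc (s1 α β) (tauc α β l m (q-p) q) (tauc α β l m lam1 0),
    tauc_mul α β l m hΔ hγ]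
  rw [mul_assoc (s1 α β) _ (s2 l), tauc_s2 α β l m (q-p+lam1) (q+0)]
  rw [← mul_assoc (s1 α β) (s2 l) _]
  rw [mul_assoc (s1 α β * s2 l) _ _, tauc_mul α β l m hΔ hγ]
  exact congrArg (HMul.hMul (s1 α β * s2 l))
    (tauc_congr α β l m (by ring) (by ring))

theorem key (α β l m : K)
    (hΔ : 8 - 2*α - 2*β - 2*(l*m) - (α*l + β*m) = 0) (hγ : l*m ≠ 4)
    (lam1 lam2 : K) : ∀ k : ℕ,
    ((s1 α β * tauc α β l m lam1 0) * (s2 l * tauc α β l m 0 lam2))^(2*k+1)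
      = (s1 α β * s2 l)^(2*k+1) *
          tauc α β l m
            (useq α (2*k+1) * (useq α (2*k+1) * lam1 + useq α (2*k) * lam2))
            (useq α (2*k+1) * (α * useq α (2*k+2) * lam1 + useq α (2*k+1) * lam2)) ∧
    ((s1 α β * tauc α β l m lam1 0) * (s2 l * tauc α β l m 0 lam2))^(2*k+2)
      = (s1 α β * s2 l)^(2*k+2) *
          tauc α β l m
            (useq α (2*k+2) * (α * useq α (2*k+2) * lam1 + useq α (2*k+1) * lam2))
            (α * useq α (2*k+2) * (useq α (2*k+3) * lam1 + useq α (2*k+2) * lam2)) := by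
  have hstep : ∀ (p q : K) (n : ℕ),
      ((s1 α β * tauc α β l m lam1 0) * (s2 l * tauc α β l m 0 lam2))^n
        = (s1 α β * s2 l)^n * tauc α β l m p q →
      ((s1 α β * tauc α β l m lam1 0) * (s2 l * tauc α β l m 0 lam2))^(n+1)
        = (s1 α β * s2 l)^(n+1) *
            tauc α β l m (q - p + lam1) (α*(q - p + lam1) - q + lam2) := by
    intro p q n h
    rw [pow_succ, h, mul_assoc, step_lemma α β l m hΔ hγ lam1 lam2 p q,
      ← mul_assoc, ← pow_succ]
  intro k
  induction k with
  | zero =>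
    have h0 : ((s1 α β * tauc α β l m lam1 0) * (s2 l * tauc α β l m 0 lam2))^0
        = (s1 α β * s2 l)^0 * tauc α β l m 0 0 := by
      rw [pow_zero, pow_zero, tauc_zero, mul_one]
    have h1 := hstep 0 0 0 h0
    have h1' : ((s1 α β * tauc α β l m lam1 0) * (s2 l * tauc α β l m 0 lam2))^(2*0+1)
        = (s1 α β * s2 l)^(2*0+1) *
            tauc α β l m
              (useq α (2*0+1) * (useq α (2*0+1) * lam1 + useq α (2*0) * lam2))
              (useq α (2*0+1) * (α * useq α (2*0+2) * lam1 + useq α (2*0+1) * lam2)) := by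
      rw [show (2*0+1 : ℕ) = 0+1 from rfl, show (2*0+2 : ℕ) = 2 from rfl,
        show (2*0 : ℕ) = 0 from rfl, h1]
      refine congrArg _ (tauc_congr α β l m ?_ ?_) <;>
        · norm_num [useq]
          try ring
    refine ⟨h1', ?_⟩
    have h2 := hstep _ _ (2*0+1) h1'
    rw [show (2*0+1+1 : ℕ) = 2*0+2 from rfl] at h2
    rw [h2]
    refine congrArg _ (tauc_congr α β l m ?_ ?_) <;>
      · norm_num [useq]
        try ring
  | succ k ih =>
    have h2 : useq α (2*k+3) = α * useq α (2*k+2) - useq α (2*k+1) := (useq_pair α k).2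
    have h3 : useq α (2*k+4) = useq α (2*k+3) - useq α (2*k+2) := by
      have := (useq_pair α (k+1)).1
      rwa [show 2*(k+1)+2 = 2*k+4 by ring, show 2*(k+1)+1 = 2*k+3 by ring,
        show 2*(k+1) = 2*k+2 by ring] at this
    have h5 : useq α (2*k+5) = α * useq α (2*k+4) - useq α (2*k+3) := by
      have := (useq_pair α (k+1)).2
      rwa [show 2*(k+1)+3 = 2*k+5 by ring, show 2*(k+1)+2 = 2*k+4 by ring,
        show 2*(k+1)+1 = 2*k+3 by ring] at this
    have hQe : useq α (2*k+3)^2 - α * useq α (2*k+2) * useq α (2*k+3)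
        + α * useq α (2*k+2)^2 = 1 := (useq_Q α k).2
    have hQo : α * useq α (2*k+4)^2 - α * useq α (2*k+3) * useq α (2*k+4)
        + useq α (2*k+3)^2 = 1 := by
      have := (useq_Q α (k+1)).1
      rwa [show 2*(k+1)+2 = 2*k+4 by ring, show 2*(k+1)+1 = 2*k+3 by ring] at this
    have hOdd := hstep _ _ (2*k+2) ih.2
    rw [show 2*k+2+1 = 2*k+3 by ring] at hOdd
    have goal1 : ((s1 α β * tauc α β l m lam1 0) * (s2 l * tauc α β l m 0 lam2))^(2*(k+1)+1)
        = (s1 α β * s2 l)^(2*(k+1)+1) *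
            tauc α β l m
              (useq α (2*(k+1)+1) * (useq α (2*(k+1)+1) * lam1 + useq α (2*(k+1)) * lam2))
              (useq α (2*(k+1)+1) * (α * useq α (2*(k+1)+2) * lam1 + useq α (2*(k+1)+1) * lam2)) := by
      rw [show 2*(k+1)+1 = 2*k+3 by ring, show 2*(k+1)+2 = 2*k+4 by ring,
        show 2*(k+1) = 2*k+2 by ring]
      rw [hOdd]
      refine congrArg _ (tauc_congr α β l m ?_ ?_)
      · linear_combination (-lam1)*hQe - lam2*(useq α (2*k+2))*h2
      · linear_combination (-lam1)*(α*(useq α (2*k+3))*h3 + α*hQe)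
          - lam2*(hQe + α*(useq α (2*k+2))*h2)
    refine ⟨goal1, ?_⟩
    have hEven := hstep _ _ (2*(k+1)+1) goal1
    rw [show 2*(k+1)+1+1 = 2*(k+1)+2 by ring] at hEven
    rw [hEven]
    rw [show 2*(k+1)+1 = 2*k+3 by ring, show 2*(k+1)+2 = 2*k+4 by ring,
      show 2*(k+1)+3 = 2*k+5 by ring, show 2*(k+1) = 2*k+2 by ring]
    refine congrArg _ (tauc_congr α β l m ?_ ?_)
    · linear_combination (-lam1)*hQo - lam2*(useq α (2*k+3))*h3
    · linear_combination (-lam1)*(α*hQo + α*(useq α (2*k+4))*h5)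
        - lam2*(hQo + α*(useq α (2*k+3))*h3)


theorem tauv_c1 (α β l m : K)
    (hΔ : 8 - 2*α - 2*β - 2*(l*m) - (α*l + β*m) = 0) (hγ : l*m ≠ 4) (lam1 : K) :
    tauv l m (lam1 • c1 α β) = tauc α β l m lam1 0 := by
  simp only [tauv, c1, Prod.smul_mk, smul_eq_mul]
  rw [tauc_tau α β l m hΔ hγ]
  exact tau_congr l m (by ring) (by ring)

theorem tauv_c2 (α β l m : K)
    (hΔ : 8 - 2*α - 2*β - 2*(l*m) - (α*l + β*m) = 0) (hγ : l*m ≠ 4) (lam2 : K) :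
    tauv l m (lam2 • c2 l) = tauc α β l m 0 lam2 := by
  simp only [tauv, c2, Prod.smul_mk, smul_eq_mul]
  rw [tauc_tau α β l m hΔ hγ]
  exact tau_congr l m (by ring) (by ring)

theorem tauv_comb (α β l m : K)
    (hΔ : 8 - 2*α - 2*β - 2*(l*m) - (α*l + β*m) = 0) (hγ : l*m ≠ 4) (s P Q : K) :
    tauv l m (s • (P • c1 α β + Q • c2 l)) = tauc α β l m (s*P) (s*Q) := by
  simp only [tauv, c1, c2, Prod.smul_mk, Prod.mk_add_mk, smul_eq_mul]
  rw [tauc_tau α β l m hΔ hγ]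
  exact tau_congr l m (by ring) (by ring)

end

/-- Proposition 3: with `Δ = 0`, `γ ≠ 4`, `s₁' = s₁ ∘ τ(λ₁c₁)`,
`s₂' = s₂ ∘ τ(λ₂c₂)` and `u = u_α`, for all `n ≥ 1`:
`(s₁'s₂')ⁿ = (s₁s₂)ⁿ ∘ τ(Bₙ)` where for even `n`
`Bₙ = u(n)((αu(n)λ₁ + u(n−1)λ₂)c₁ + α(u(n+1)λ₁ + u(n)λ₂)c₂)` and for odd `n`
`Bₙ = u(n)((u(n)λ₁ + u(n−1)λ₂)c₁ + (αu(n+1)λ₁ + u(n)λ₂)c₂)`. -/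
theorem stmt11 (α β l m : K)
    (hΔ : 8 - 2*α - 2*β - 2*(l*m) - (α*l + β*m) = 0) (hγ : l*m ≠ 4)
    (lam1 lam2 : K) (n : ℕ) (hn : 1 ≤ n) :
    (Even n →
      ((s1 α β * tauv l m (lam1 • c1 α β)) * (s2 l * tauv l m (lam2 • c2 l)))^n
        = (s1 α β * s2 l)^n *
            tauv l m (useq α n •
              ((α * useq α n * lam1 + useq α (n-1) * lam2) • c1 α β
                + (α * (useq α (n+1) * lam1 + useq α n * lam2)) • c2 l)) ) ∧
    (Odd n →
      ((s1 α β * tauv l m (lam1 • c1 α β)) * (s2 l * tauv l m (lam2 • c2 l)))^n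
        = (s1 α β * s2 l)^n *
            tauv l m (useq α n •
              ((useq α n * lam1 + useq α (n-1) * lam2) • c1 α β
                + (α * useq α (n+1) * lam1 + useq α n * lam2) • c2 l)) ) := by
  constructor
  · intro hev
    obtain ⟨k, rfl⟩ : ∃ k, n = 2*k+2 := by
      obtain ⟨j, hj⟩ := hev
      exact ⟨j-1, by omega⟩
    rw [tauv_c1 α β l m hΔ hγ lam1, tauv_c2 α β l m hΔ hγ lam2,
      tauv_comb α β l m hΔ hγ, (key α β l m hΔ hγ lam1 lam2 k).2]
    refine congrArg _ (tauc_congr α β l m ?_ ?_)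
    · rw [show 2*k+2-1 = 2*k+1 by omega]
    · rw [show 2*k+2+1 = 2*k+3 by omega]
      ring
  · intro hod
    obtain ⟨k, rfl⟩ : ∃ k, n = 2*k+1 := by
      obtain ⟨j, hj⟩ := hod
      exact ⟨j, by omega⟩
    rw [tauv_c1 α β l m hΔ hγ lam1, tauv_c2 α β l m hΔ hγ lam2,
      tauv_comb α β l m hΔ hγ, (key α β l m hΔ hγ lam1 lam2 k).1]
    refine congrArg _ (tauc_congr α β l m ?_ ?_)
    · rw [show 2*k+1-1 = 2*k by omega]
    · rw [show 2*k+1+1 = 2*k+2 by omega]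

end
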